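/- Let p_{<d}(x₁,…,x_r) := p̃_d(x₁,…,x_r) - p_d(x₁,…,x_r) be the difference of the deformed power sum and the ordinary power sum. Then for d ≥ 1 the recursion p_{<d} = C(r, d+1) + ∑_{i=1}^{d-1} (-1)^{i-1} · [ p_{<(d-i)} - C(r-i, d+1-i) ] · e_i(x₁,…,x_r) holds, where C denotes binomial coefficients and e_i the elementary symmetric polynomials. -/

import Mathlib

open MvPolynomial Finset

namespace DeformedAux

variable {r : ℕ}

lemma prodlin (g : PowerSeries (MvPolynomial (Fin r) ℚ)) (f : Fin r → MvPolynomial (Fin r) ℚ) :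
    ∏ i : Fin r, (g + PowerSeries.C (R := MvPolynomial (Fin r) ℚ) (f i) * PowerSeries.X) =
      ∑ S ∈ (univ : Finset (Fin r)).powerset,
        PowerSeries.C (R := MvPolynomial (Fin r) ℚ) (∏ i ∈ S, f i) * PowerSeries.X ^ S.card
          * g ^ (r - S.card) := by
  rw [Finset.prod_congr rfl (fun i _ => add_comm g _), Finset.prod_add]
  refine Finset.sum_congr rfl fun S hS => ?_
  rw [Finset.prod_const, Finset.card_sdiff_of_subset (mem_powerset.mp hS), Finset.prod_mul_distrib,
    Finset.prod_const, map_prod, card_univ, Fintype.card_fin]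

lemma prod_negX (S : Finset (Fin r)) :
    ∏ i ∈ S, (-X i : MvPolynomial (Fin r) ℚ) = (-1) ^ S.card * ∏ i ∈ S, X i := by
  calc ∏ i ∈ S, -(X i : MvPolynomial (Fin r) ℚ)
      = ∏ i ∈ S, ((-1) * X i) := Finset.prod_congr rfl fun i _ => (neg_one_mul _).symm
    _ = (-1) ^ S.card * ∏ i ∈ S, (X i : MvPolynomial (Fin r) ℚ) := by
        rw [Finset.prod_mul_distrib, Finset.prod_const]

lemma esymm_gt {k : ℕ} (hk : r < k) : esymm (Fin r) ℚ k = 0 := by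
  rw [esymm, Finset.powersetCard_eq_empty.mpr (by simpa using hk), Finset.sum_empty]

lemma coeffE (n : ℕ) :
    PowerSeries.coeff (R := MvPolynomial (Fin r) ℚ) n
        (∏ i : Fin r, (1 - PowerSeries.C (R := MvPolynomial (Fin r) ℚ) (X i) * PowerSeries.X)) =
      (-1) ^ n * esymm (Fin r) ℚ n := by
  have h1 : ∀ i ∈ (univ : Finset (Fin r)),
      (1 : PowerSeries (MvPolynomial (Fin r) ℚ))
          - PowerSeries.C (R := MvPolynomial (Fin r) ℚ) (X i) * PowerSeries.X
        = 1 + PowerSeries.C (R := MvPolynomial (Fin r) ℚ) (-X i) * PowerSeries.X := by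
    intro i _; rw [map_neg]; ring
  rw [Finset.prod_congr rfl h1, prodlin, map_sum]
  have h2 : ∀ S ∈ (univ : Finset (Fin r)).powerset,
      PowerSeries.coeff n (PowerSeries.C (R := MvPolynomial (Fin r) ℚ) (∏ i ∈ S, -X i)
          * PowerSeries.X ^ S.card * (1 : PowerSeries (MvPolynomial (Fin r) ℚ)) ^ (r - S.card)) =
        if S.card = n then (-1) ^ n * ∏ i ∈ S, (X i : MvPolynomial (Fin r) ℚ) else 0 := by
    intro S _
    rw [one_pow, mul_one, PowerSeries.coeff_C_mul_X_pow]
    split_ifs with hc hc' hc'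
    · rw [← hc', prod_negX]
    · exact absurd hc.symm hc'
    · exact absurd hc'.symm hc
    · rfl
  rw [Finset.sum_congr rfl h2, ← Finset.sum_filter, ← Finset.powersetCard_eq_filter,
    ← Finset.mul_sum, esymm]

lemma coeffF (n : ℕ) :
    PowerSeries.coeff (R := MvPolynomial (Fin r) ℚ) n
        (∏ i : Fin r, (1 + PowerSeries.C (R := MvPolynomial (Fin r) ℚ) (1 - X i) * PowerSeries.X)) =
      ∑ k ∈ range (n + 1),
        (-1) ^ k * esymm (Fin r) ℚ k * (((r - k).choose (n - k) : ℕ) : MvPolynomial (Fin r) ℚ) := by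
  have h1 : ∀ i ∈ (univ : Finset (Fin r)),
      (1 : PowerSeries (MvPolynomial (Fin r) ℚ))
          + PowerSeries.C (R := MvPolynomial (Fin r) ℚ) (1 - X i) * PowerSeries.X
        = (1 + PowerSeries.X) + PowerSeries.C (R := MvPolynomial (Fin r) ℚ) (-X i) * PowerSeries.X := by
    intro i _; rw [map_sub, map_neg, map_one]; ring
  rw [Finset.prod_congr rfl h1, prodlin, map_sum]
  have hcoe : ((1 : PowerSeries (MvPolynomial (Fin r) ℚ)) + PowerSeries.X) =
      ((1 + Polynomial.X : Polynomial (MvPolynomial (Fin r) ℚ)) :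
        PowerSeries (MvPolynomial (Fin r) ℚ)) := by
    simp
  have hpow : ∀ m j : ℕ,
      PowerSeries.coeff (R := MvPolynomial (Fin r) ℚ) j
          (((1 : PowerSeries (MvPolynomial (Fin r) ℚ)) + PowerSeries.X) ^ m) =
        ((m.choose j : ℕ) : MvPolynomial (Fin r) ℚ) := by
    intro m j
    rw [hcoe, ← Polynomial.coe_pow, Polynomial.coeff_coe, Polynomial.coeff_one_add_X_pow]
  have h2 : ∀ S ∈ (univ : Finset (Fin r)).powerset,
      PowerSeries.coeff n (PowerSeries.C (R := MvPolynomial (Fin r) ℚ) (∏ i ∈ S, -X i)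
          * PowerSeries.X ^ S.card
          * ((1 : PowerSeries (MvPolynomial (Fin r) ℚ)) + PowerSeries.X) ^ (r - S.card)) =
        (-1) ^ S.card * (∏ i ∈ S, (X i : MvPolynomial (Fin r) ℚ)) *
          (if S.card ≤ n then (((r - S.card).choose (n - S.card) : ℕ) :
            MvPolynomial (Fin r) ℚ) else 0) := by
    intro S _
    rw [mul_assoc, mul_comm (PowerSeries.X ^ S.card), ← mul_assoc,
      mul_assoc (PowerSeries.C (R := MvPolynomial (Fin r) ℚ) (∏ i ∈ S, -X i))]
    rw [show PowerSeries.C (R := MvPolynomial (Fin r) ℚ) (∏ i ∈ S, -X i) *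
        (((1 : PowerSeries (MvPolynomial (Fin r) ℚ)) + PowerSeries.X) ^ (r - S.card)
          * PowerSeries.X ^ S.card)
        = PowerSeries.C (R := MvPolynomial (Fin r) ℚ) (∏ i ∈ S, -X i) *
          (((1 : PowerSeries (MvPolynomial (Fin r) ℚ)) + PowerSeries.X) ^ (r - S.card))
          * PowerSeries.X ^ S.card by ring]
    rw [PowerSeries.coeff_mul_X_pow', prod_negX]
    split_ifs with hc
    · rw [PowerSeries.coeff_C_mul, hpow, mul_assoc]
    · rw [mul_zero]
  rw [Finset.sum_congr rfl h2]
  have hmaps : ∀ S ∈ (univ : Finset (Fin r)).powerset, S.card ∈ range (r + 1) := by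
    intro S hS
    rw [mem_range, Nat.lt_succ_iff]
    simpa using Finset.card_le_card (mem_powerset.mp hS)
  rw [← Finset.sum_fiberwise_of_maps_to hmaps]
  have h3 : ∀ k ∈ range (r + 1),
      (∑ S ∈ (univ : Finset (Fin r)).powerset with S.card = k,
        (-1) ^ S.card * (∏ i ∈ S, (X i : MvPolynomial (Fin r) ℚ)) *
          (if S.card ≤ n then (((r - S.card).choose (n - S.card) : ℕ) :
            MvPolynomial (Fin r) ℚ) else 0)) =
      (-1) ^ k * esymm (Fin r) ℚ k *
        (if k ≤ n then (((r - k).choose (n - k) : ℕ) : MvPolynomial (Fin r) ℚ) else 0) := by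
    intro k _
    rw [← Finset.powersetCard_eq_filter]
    have : ∀ S ∈ powersetCard k (univ : Finset (Fin r)),
        (-1) ^ S.card * (∏ i ∈ S, (X i : MvPolynomial (Fin r) ℚ)) *
          (if S.card ≤ n then (((r - S.card).choose (n - S.card) : ℕ) :
            MvPolynomial (Fin r) ℚ) else 0)
        = ((-1) ^ k * (if k ≤ n then (((r - k).choose (n - k) : ℕ) :
            MvPolynomial (Fin r) ℚ) else 0)) * ∏ i ∈ S, (X i : MvPolynomial (Fin r) ℚ) := by
      intro S hS
      rw [(Finset.mem_powersetCard.mp hS).2]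
      ring
    rw [Finset.sum_congr rfl this, ← Finset.mul_sum, esymm]
    ring
  rw [Finset.sum_congr rfl h3]
  -- now convert the range (r+1) sum with ite into a range (n+1) sum
  set u : ℕ → MvPolynomial (Fin r) ℚ := fun k =>
    (-1) ^ k * esymm (Fin r) ℚ k *
      (if k ≤ n then (((r - k).choose (n - k) : ℕ) : MvPolynomial (Fin r) ℚ) else 0) with hu
  have hL : ∑ k ∈ range (r + 1), u k = ∑ k ∈ range (max r n + 1), u k := by
    refine Finset.sum_subset (by gcongr <;> omega) ?_
    intro x hx hnx
    have hxr : r < x := by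
      simp only [mem_range] at hx hnx; omega
    simp [hu, esymm_gt hxr]
  have hR : ∑ k ∈ range (max r n + 1), u k = ∑ k ∈ range (n + 1), u k := by
    refine (Finset.sum_subset (by gcongr <;> omega) ?_).symm
    intro x hx hnx
    have hxn : n < x := by
      simp only [mem_range] at hx hnx; omega
    simp [hu, Nat.not_le.mpr hxn]
  rw [hL, hR]
  refine Finset.sum_congr rfl fun k hk => ?_
  have hkn : k ≤ n := Nat.lt_succ_iff.mp (mem_range.mp hk)
  simp [hu, hkn]

lemma star (r : ℕ) (P : ℕ → MvPolynomial (Fin r) ℚ)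
    (h : (PowerSeries.mk (fun n => if n = 0 then 1 else P (n - 1))) *
          ∏ i : Fin r, (1 - PowerSeries.C (R := MvPolynomial (Fin r) ℚ) (X i) * PowerSeries.X) =
        ∏ i : Fin r, (1 + PowerSeries.C (R := MvPolynomial (Fin r) ℚ) (1 - X i) * PowerSeries.X))
    (d : ℕ) (hd : 1 ≤ d) :
    ∑ i ∈ range d, (-1) ^ i * esymm (Fin r) ℚ i * (P (d - i) - psum (Fin r) ℚ (d - i)) =
      ∑ i ∈ range d, (-1) ^ i * esymm (Fin r) ℚ i *
        (((r - i).choose (d + 1 - i) : ℕ) : MvPolynomial (Fin r) ℚ) := by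
  have hA : ∀ n : ℕ, PowerSeries.coeff (R := MvPolynomial (Fin r) ℚ) n
      ((PowerSeries.mk (fun n => if n = 0 then 1 else P (n - 1))) *
        ∏ i : Fin r, (1 - PowerSeries.C (R := MvPolynomial (Fin r) ℚ) (X i) * PowerSeries.X)) =
      PowerSeries.coeff (R := MvPolynomial (Fin r) ℚ) n
        (∏ i : Fin r, (1 + PowerSeries.C (R := MvPolynomial (Fin r) ℚ) (1 - X i) * PowerSeries.X)) :=
    fun n => congrArg _ h
  -- P 0 = r
  have E5 : P 0 = (r : MvPolynomial (Fin r) ℚ) := by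
    have h1 := hA 1
    rw [PowerSeries.coeff_mul, Finset.Nat.sum_antidiagonal_eq_sum_range_succ_mk, coeffF] at h1
    simp only [Finset.sum_range_succ, Finset.sum_range_zero, PowerSeries.coeff_mk, coeffE,
      esymm_zero, Nat.choose_one_right, Nat.choose_zero_right, pow_zero, pow_one, one_mul,
      mul_one, Nat.sub_zero, Nat.sub_self, zero_add, if_pos rfl] at h1
    norm_num at h1
    linear_combination h1
  -- coefficient of d+1 from the hypothesis
  have hAd := hA (d + 1)
  rw [PowerSeries.coeff_mul, Finset.Nat.sum_antidiagonal_eq_sum_range_succ_mk,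
    Finset.sum_range_succ'] at hAd
  simp only [PowerSeries.coeff_mk, coeffE, Nat.succ_sub_succ, Nat.add_sub_cancel, Nat.sub_zero,
    Nat.succ_ne_zero, if_false, if_pos rfl, one_mul, reduceIte] at hAd
  have hrefl : ∑ i ∈ Finset.range (d + 1),
      P i * ((-1) ^ (d - i) * esymm (Fin r) ℚ (d - i)) =
      ∑ i ∈ Finset.range (d + 1), (-1) ^ i * esymm (Fin r) ℚ i * P (d - i) := by
    rw [← Finset.sum_range_reflect]
    refine Finset.sum_congr rfl fun j hj => ?_
    have hj' : j ≤ d := by have := mem_range.mp hj; omega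
    rw [show d + 1 - 1 - j = d - j from by omega, Nat.sub_sub_self hj']
    ring
  rw [hrefl] at hAd
  have S1 : ∑ i ∈ Finset.range (d + 1), (-1) ^ i * esymm (Fin r) ℚ i * P (d - i) =
      (∑ i ∈ Finset.range d, (-1) ^ i * esymm (Fin r) ℚ i * P (d - i)) +
        (-1) ^ d * esymm (Fin r) ℚ d * P 0 := by
    rw [Finset.sum_range_succ, Nat.sub_self]
  -- Newton's identity
  have hN := MvPolynomial.mul_esymm_eq_sum (Fin r) ℚ d
  have hs : (∑ a ∈ Finset.HasAntidiagonal.antidiagonal d with a.1 < d,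
      (-1 : MvPolynomial (Fin r) ℚ) ^ a.1 * esymm (Fin r) ℚ a.1 * psum (Fin r) ℚ a.2) =
      ∑ i ∈ Finset.range d, (-1) ^ i * esymm (Fin r) ℚ i * psum (Fin r) ℚ (d - i) := by
    rw [Finset.sum_filter, Finset.Nat.sum_antidiagonal_eq_sum_range_succ_mk,
      Finset.sum_range_succ, if_neg (lt_irrefl d), add_zero]
    exact Finset.sum_congr rfl fun i hi => if_pos (mem_range.mp hi)
  rw [hs] at hN
  have hsq : (-1 : MvPolynomial (Fin r) ℚ) ^ (d + 1) * (-1) ^ (d + 1) = 1 := by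
    rw [← pow_add]; exact Even.neg_one_pow ⟨d + 1, by ring⟩
  have E2 : ∑ i ∈ Finset.range d, (-1) ^ i * esymm (Fin r) ℚ i * psum (Fin r) ℚ (d - i) =
      (-1) ^ (d + 1) * (d : MvPolynomial (Fin r) ℚ) * esymm (Fin r) ℚ d := by
    linear_combination (-((-1 : MvPolynomial (Fin r) ℚ) ^ (d + 1))) * hN -
      (∑ i ∈ Finset.range d, (-1 : MvPolynomial (Fin r) ℚ) ^ i * esymm (Fin r) ℚ i *
        psum (Fin r) ℚ (d - i)) * hsq
  -- expansion of the right-hand side coefficient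
  have E3 : PowerSeries.coeff (R := MvPolynomial (Fin r) ℚ) (d + 1)
      (∏ i : Fin r, (1 + PowerSeries.C (R := MvPolynomial (Fin r) ℚ) (1 - X i) * PowerSeries.X)) =
      (∑ i ∈ Finset.range d, (-1) ^ i * esymm (Fin r) ℚ i *
        (((r - i).choose (d + 1 - i) : ℕ) : MvPolynomial (Fin r) ℚ)) +
        (-1) ^ d * esymm (Fin r) ℚ d * (((r - d).choose 1 : ℕ) : MvPolynomial (Fin r) ℚ) +
        (-1) ^ (d + 1) * esymm (Fin r) ℚ (d + 1) := by
    rw [coeffF, Finset.sum_range_succ, Finset.sum_range_succ]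
    rw [show d + 1 - d = 1 from by omega, Nat.sub_self, Nat.choose_zero_right, Nat.cast_one,
      mul_one]
  have E4 : esymm (Fin r) ℚ d * ((r : MvPolynomial (Fin r) ℚ) - (d : MvPolynomial (Fin r) ℚ)) =
      esymm (Fin r) ℚ d * (((r - d : ℕ) : ℕ) : MvPolynomial (Fin r) ℚ) := by
    rcases le_or_gt d r with hdr | hdr
    · rw [Nat.cast_sub hdr]
    · rw [esymm_gt hdr, zero_mul, zero_mul]
  have E6 : (((r - d).choose 1 : ℕ) : MvPolynomial (Fin r) ℚ) =
      (((r - d : ℕ) : ℕ) : MvPolynomial (Fin r) ℚ) := by rw [Nat.choose_one_right]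
  have B1 : ∑ i ∈ Finset.range d, (-1) ^ i * esymm (Fin r) ℚ i *
      (P (d - i) - psum (Fin r) ℚ (d - i)) =
      (∑ i ∈ Finset.range d, (-1) ^ i * esymm (Fin r) ℚ i * P (d - i)) -
        ∑ i ∈ Finset.range d, (-1) ^ i * esymm (Fin r) ℚ i * psum (Fin r) ℚ (d - i) := by
    rw [← Finset.sum_sub_distrib]
    exact Finset.sum_congr rfl fun i _ => by ring
  rw [B1]
  linear_combination hAd - S1 - E2 + E3 -
    ((-1 : MvPolynomial (Fin r) ℚ) ^ d * esymm (Fin r) ℚ d) * E5 +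
    ((-1 : MvPolynomial (Fin r) ℚ) ^ d * esymm (Fin r) ℚ d) * E6 -
    ((-1 : MvPolynomial (Fin r) ℚ) ^ d) * E4

end DeformedAux

/-- Let `p̃_d` be the deformed power sums, defined by
`1 + ∑_{d≥0} p̃_d u^{-d-1} = ∏_{i=1}^r (u+1-x_i)/(u-x_i)` (expressed below with `t = u⁻¹`
and denominators cleared), and let `p_{<d} := p̃_d - p_d` be the difference with the
ordinary power sum `p_d = ∑ᵢ xᵢ^d`.  Then for `d ≥ 1` the recursion
`p_{<d} = C(r, d+1) + ∑_{i=1}^{d-1} (-1)^{i-1} [p_{<(d-i)} - C(r-i, d+1-i)] e_i` holds. -/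
theorem deformed_power_sum_recursion (r : ℕ)
    (P : ℕ → MvPolynomial (Fin r) ℚ)
    (h : (PowerSeries.mk (fun n => if n = 0 then 1 else P (n - 1))) *
          ∏ i : Fin r, (1 - PowerSeries.C (R := MvPolynomial (Fin r) ℚ) (X i) * PowerSeries.X) =
        ∏ i : Fin r, (1 + PowerSeries.C (R := MvPolynomial (Fin r) ℚ) (1 - X i) * PowerSeries.X)) :
    ∀ d : ℕ, 1 ≤ d →
      P d - ∑ i : Fin r, X i ^ d =
        ((r.choose (d + 1) : ℕ) : MvPolynomial (Fin r) ℚ) +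
        ∑ i ∈ Finset.Icc 1 (d - 1),
          (-1 : MvPolynomial (Fin r) ℚ) ^ (i - 1) *
            ((P (d - i) - ∑ j : Fin r, X j ^ (d - i)) -
              (((r - i).choose (d + 1 - i) : ℕ) : MvPolynomial (Fin r) ℚ)) *
            esymm (Fin r) ℚ i := by
  intro d hd
  have hpsum : ∀ m : ℕ, (∑ j : Fin r, (X j : MvPolynomial (Fin r) ℚ) ^ m) =
      psum (Fin r) ℚ m := fun m => rfl
  simp only [hpsum]
  have hstar := DeformedAux.star r P h d hd
  have hIcc : Finset.Icc 1 (d - 1) = Finset.Ico 1 d := by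
    rw [← Finset.Ico_add_one_right_eq_Icc]; congr 1; omega
  rw [hIcc]
  rw [Finset.range_eq_Ico, Finset.sum_eq_sum_Ico_succ_bot (show 0 < d by omega),
    Finset.sum_eq_sum_Ico_succ_bot (show 0 < d by omega)] at hstar
  simp only [pow_zero, esymm_zero, one_mul, mul_one, Nat.sub_zero, zero_add] at hstar
  have hterm : ∀ i ∈ Finset.Ico 1 d,
      (-1 : MvPolynomial (Fin r) ℚ) ^ (i - 1) *
          ((P (d - i) - psum (Fin r) ℚ (d - i)) -
            (((r - i).choose (d + 1 - i) : ℕ) : MvPolynomial (Fin r) ℚ)) * esymm (Fin r) ℚ i =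
        (-1) ^ i * esymm (Fin r) ℚ i * (((r - i).choose (d + 1 - i) : ℕ) : MvPolynomial (Fin r) ℚ)
          - (-1) ^ i * esymm (Fin r) ℚ i * (P (d - i) - psum (Fin r) ℚ (d - i)) := by
    intro i hi
    obtain ⟨j, rfl⟩ := Nat.exists_eq_add_of_le (Finset.mem_Ico.mp hi).1
    rw [show 1 + j - 1 = j from by omega, show 1 + j = j + 1 from by omega, pow_succ]
    ring
  rw [Finset.sum_congr rfl hterm, Finset.sum_sub_distrib]
  linear_combination hstar
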